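/- Let R be a Γ-graded ring which is graded prime (for homogeneous x, y ∈ R, xRy = 0 implies x = 0 or y = 0), graded von Neumann regular, and graded abelian (every homogeneous idempotent of R is central). Then R is a graded division ring: every nonzero homogeneous element of R is invertible in R. -/
import Mathlib


/- Setting: `Γ = ι` an additive abelian group, `R` a `ι`-graded ring with identity,
with homogeneous components the additive subgroups `𝒜 γ`. -/

variable {ι R : Type*}

section Defs
variable [DecidableEq ι] [AddCommGroup ι] [Ring R] (𝒜 : ι → AddSubgroup R) [GradedRing 𝒜]

/-- An element of `R` is homogeneous if it lies in some component `𝒜 γ`. -/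
def IsHomog (a : R) : Prop := ∃ γ : ι, a ∈ 𝒜 γ

/-- `R` is graded von Neumann regular: every homogeneous element has an inner inverse. -/
def GradedVNRegular : Prop := ∀ a : R, IsHomog 𝒜 a → ∃ b : R, a * b * a = a

/-- A subset of `R` is a right ideal. -/
def IsRightIdealSet (I : Set R) : Prop :=
  (0 : R) ∈ I ∧ (∀ x ∈ I, ∀ y ∈ I, x + y ∈ I) ∧ ∀ x ∈ I, ∀ r : R, x * r ∈ I

/-- A graded right ideal: a right ideal containing all homogeneous components of
its elements. -/
def IsGradedRightIdeal (I : Set R) : Prop :=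
  IsRightIdealSet I ∧ ∀ x ∈ I, ∀ γ : ι, ((DirectSum.decompose 𝒜 x γ : 𝒜 γ) : R) ∈ I

/-- `A` is graded essential in `B` (as graded right ideals): `A ⊆ B` and every nonzero
graded right ideal contained in `B` meets `A` nontrivially. -/
def GradedEssentialIn (A B : Set R) : Prop :=
  A ⊆ B ∧ ∀ J : Set R, IsGradedRightIdeal 𝒜 J → J ⊆ B → (∃ x ∈ J, x ≠ 0) →
    ∃ x, x ∈ A ∩ J ∧ x ≠ 0

/-- Graded Baer criterion: `R` is graded right self-injective. A homomorphism from a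
graded right ideal `I` to `R` is encoded as a function `f : R → R` which is additive on
`I`, right `R`-linear on `I`, and of degree `γ` on `I`. -/
def GradedSelfInjective : Prop :=
  ∀ I : Set R, IsGradedRightIdeal 𝒜 I → ∀ γ : ι, ∀ f : R → R,
    (∀ x ∈ I, ∀ y ∈ I, f (x + y) = f x + f y) →
    (∀ x ∈ I, ∀ r : R, f (x * r) = f x * r) →
    (∀ δ : ι, ∀ x ∈ I, x ∈ 𝒜 δ → f x ∈ 𝒜 (γ + δ)) →
    ∃ c ∈ 𝒜 γ, ∀ x ∈ I, f x = c * x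

end Defs

/-- A graded prime, graded von Neumann regular, graded abelian ring is
a graded division ring: every nonzero homogeneous element is invertible. -/
theorem gradedPrime_regular_abelian_is_gradedDivisionRing
    [DecidableEq ι] [AddCommGroup ι] [Ring R] (𝒜 : ι → AddSubgroup R) [GradedRing 𝒜]
    (hprime : ∀ x y : R, IsHomog 𝒜 x → IsHomog 𝒜 y →
      (∀ r : R, x * r * y = 0) → x = 0 ∨ y = 0)
    (hreg : GradedVNRegular 𝒜)
    (habelian : ∀ e : R, IsHomog 𝒜 e → e * e = e → ∀ r : R, e * r = r * e) :
    ∀ x : R, IsHomog 𝒜 x → x ≠ 0 → ∃ y : R, x * y = 1 ∧ y * x = 1 := by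
  classical
  rintro x ⟨γ, hx⟩ hx0
  obtain ⟨b, hb⟩ := hreg x ⟨γ, hx⟩
  set b' : R := (DirectSum.decompose 𝒜 b (-γ) : R) with hb'def
  have hb' : b' ∈ 𝒜 (-γ) := SetLike.coe_mem _
  -- key : x * b' * x = x
  have key : x * b' * x = x := by
    have hsum : x * b * x =
        ∑ δ ∈ DFinsupp.support (DirectSum.decompose 𝒜 b),
          x * (DirectSum.decompose 𝒜 b δ : R) * x := by
      conv_lhs => rw [← DirectSum.sum_support_decompose 𝒜 b]
      rw [Finset.mul_sum, Finset.sum_mul]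
    have hmem : ∀ δ : ι, x * (DirectSum.decompose 𝒜 b δ : R) * x ∈ 𝒜 (γ + δ + γ) :=
      fun δ => SetLike.mul_mem_graded (SetLike.mul_mem_graded hx (SetLike.coe_mem _)) hx
    have hdec : (DirectSum.decompose 𝒜 (x * b * x) γ : R) = x := by
      rw [hb, DirectSum.decompose_of_mem_same 𝒜 hx]
    rw [hsum] at hdec
    rw [DirectSum.decompose_sum] at hdec
    rw [DFinsupp.finset_sum_apply] at hdec
    push_cast at hdec
    have hterm : ∀ δ ∈ DFinsupp.support (DirectSum.decompose 𝒜 b),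
        ((DirectSum.decompose 𝒜 (x * (DirectSum.decompose 𝒜 b δ : R) * x) γ : 𝒜 γ) : R)
          = if δ = -γ then x * (DirectSum.decompose 𝒜 b δ : R) * x else 0 := by
      intro δ _
      by_cases h : δ = -γ
      · subst h
        rw [if_pos rfl]
        have : x * (DirectSum.decompose 𝒜 b (-γ) : R) * x ∈ 𝒜 γ := by
          have := hmem (-γ)
          rwa [add_neg_cancel, zero_add] at this
        exact DirectSum.decompose_of_mem_same 𝒜 this
      · rw [if_neg h]
        refine DirectSum.decompose_of_mem_ne 𝒜 (hmem δ) ?_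
        intro hcon
        apply h
        have : γ + δ + γ = γ + -γ + γ := by rw [hcon]; abel
        exact add_left_cancel (add_right_cancel this)
    rw [Finset.sum_congr rfl hterm] at hdec
    rw [Finset.sum_ite_eq' _ (-γ) (fun δ => x * (DirectSum.decompose 𝒜 b δ : R) * x)] at hdec
    by_cases hmemsup : -γ ∈ DFinsupp.support (DirectSum.decompose 𝒜 b)
    · rw [if_pos hmemsup] at hdec
      rw [← hb'def] at hdec
      exact hdec
    · rw [if_neg hmemsup] at hdec
      exact absurd hdec.symm hx0
  -- e = x * b' is a homogeneous idempotent
  have he : x * b' ∈ 𝒜 (0 : ι) := by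
    have := SetLike.mul_mem_graded hx hb'
    rwa [add_neg_cancel] at this
  have heidem : (x * b') * (x * b') = x * b' := by
    rw [← mul_assoc, key]
  have hecentral := habelian (x * b') ⟨0, he⟩ heidem
  -- f = b' * x is a homogeneous idempotent
  have hf : b' * x ∈ 𝒜 (0 : ι) := by
    have := SetLike.mul_mem_graded hb' hx
    rwa [neg_add_cancel] at this
  have hfidem : (b' * x) * (b' * x) = b' * x := by
    rw [show b' * x * (b' * x) = b' * (x * b' * x) from by noncomm_ring, key]
  have hfcentral := habelian (b' * x) ⟨0, hf⟩ hfidem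
  -- 1 - e is homogeneous; (1-e) R x = 0 ⇒ e = 1
  have h1 : (1 : R) ∈ 𝒜 (0 : ι) := SetLike.one_mem_graded 𝒜
  have hone : x * b' = 1 := by
    have hz : ∀ r : R, (1 - x * b') * r * x = 0 := by
      intro r
      have hc : (1 - x * b') * r = r * (1 - x * b') := by
        rw [sub_mul, mul_sub, one_mul, mul_one, hecentral r]
      rw [hc, mul_assoc, sub_mul, one_mul, key, sub_self, mul_zero]
    rcases hprime (1 - x * b') x ⟨0, AddSubgroup.sub_mem _ h1 he⟩ ⟨γ, hx⟩ hz with h | h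
    · exact (sub_eq_zero.mp h).symm
    · exact absurd h hx0
  have htwo : b' * x = 1 := by
    have hz : ∀ r : R, x * r * (1 - b' * x) = 0 := by
      intro r
      have hc : (1 - b' * x) * r = r * (1 - b' * x) := by
        rw [sub_mul, mul_sub, one_mul, mul_one, hfcentral r]
      rw [mul_assoc, ← hc, ← mul_assoc, mul_sub, mul_one, ← mul_assoc x b' x, key,
        sub_self, zero_mul]
    rcases hprime x (1 - b' * x) ⟨γ, hx⟩ ⟨0, AddSubgroup.sub_mem _ h1 hf⟩ hz with h | h
    · exact absurd h hx0
    · exact (sub_eq_zero.mp h).symm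
  exact ⟨b', hone, htwo⟩
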